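/- Let θ be a solution of the generalized Kuramoto model (symmetric coupling, zero-diagonal, Σ_j ω_j = 0) which is a phase-locked state, i.e., there is L > 0 with |θ_j(t) − θ_k(t)| ≤ L for all j,k and all t > 0. Then θ is a frequency synchronization state: lim_{t→∞} θ̇_j(t) = 0 for all j. -/

import Mathlib

set_option maxHeartbeats 1000000

theorem stmt5 (N : ℕ) (d : Fin N → ℝ) (hd : ∀ j, 0 < d j)
    (ω : Fin N → ℝ) (hω : ∑ j, ω j = 0)
    (Λ : Fin N → Fin N → ℝ) (hΛsym : ∀ j k, Λ j k = Λ k j) (hΛdiag : ∀ j, Λ j j = 0)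
    (θ : Fin N → ℝ → ℝ) (hθ : ∀ j, Differentiable ℝ (θ j))
    (hode : ∀ j t, d j * deriv (θ j) t
      = ω j + (1 / (N:ℝ)) * ∑ k, Λ j k * Real.sin (θ k t - θ j t))
    (L : ℝ) (hL : 0 < L)
    (hlock : ∀ j k, ∀ t > (0:ℝ), |θ j t - θ k t| ≤ L) :
    ∀ j, Filter.Tendsto (fun t => deriv (θ j) t) Filter.atTop (nhds 0) := by
  intro j0
  have hN : 0 < N := j0.pos
  have hNR : (0:ℝ) < N := by exact_mod_cast hN
  set G : Fin N → ℝ → ℝ :=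
    fun j t => (ω j + (1 / (N:ℝ)) * ∑ k, Λ j k * Real.sin (θ k t - θ j t)) / d j with hGdef
  have hderiv : ∀ j t, deriv (θ j) t = G j t := by
    intro j t
    rw [hGdef, eq_div_iff (hd j).ne', mul_comm]
    exact hode j t
  have hodeG : ∀ j t, d j * G j t = ω j + (1 / (N:ℝ)) * ∑ k, Λ j k * Real.sin (θ k t - θ j t) := by
    intro j t; rw [← hderiv]; exact hode j t
  have hθder : ∀ j t, HasDerivAt (θ j) (G j t) t := by
    intro j t
    have := ((hθ j) t).hasDerivAt
    rwa [hderiv j t] at this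
  -- uniform bound on G
  set B : ℝ := ∑ j, (|ω j| + (1 / (N:ℝ)) * ∑ k, |Λ j k|) / d j with hBdef
  have hCnn : ∀ j, 0 ≤ (|ω j| + (1 / (N:ℝ)) * ∑ k, |Λ j k|) / d j := by
    intro j
    apply div_nonneg _ (hd j).le
    have : (0:ℝ) ≤ ∑ k, |Λ j k| := Finset.sum_nonneg fun k _ => abs_nonneg _
    positivity
  have hB0 : 0 ≤ B := Finset.sum_nonneg fun j _ => hCnn j
  have hGB : ∀ j t, |G j t| ≤ B := by
    intro j t
    have hdj := hd j
    have h1 : |G j t| ≤ (|ω j| + (1 / (N:ℝ)) * ∑ k, |Λ j k|) / d j := by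
      rw [hGdef]
      simp only [abs_div, abs_of_pos hdj]
      gcongr
      refine (abs_add_le _ _).trans (add_le_add_right ?_ _)
      rw [abs_mul, abs_of_nonneg (by positivity : (0:ℝ) ≤ 1 / (N:ℝ))]
      refine mul_le_mul_of_nonneg_left ?_ (by positivity)
      refine (Finset.abs_sum_le_sum_abs _ _).trans ?_
      refine Finset.sum_le_sum fun k _ => ?_
      rw [abs_mul]
      exact mul_le_of_le_one_right (abs_nonneg _) (Real.abs_sin_le_one _)
    exact h1.trans (Finset.single_le_sum (fun j _ => hCnn j) (Finset.mem_univ j))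
  -- derivative of G j
  set G' : Fin N → ℝ → ℝ := fun j t =>
    ((1 / (N:ℝ)) * ∑ k, Λ j k * (Real.cos (θ k t - θ j t) * (G k t - G j t))) / d j with hG'def
  have hGder : ∀ j t, HasDerivAt (G j) (G' j t) t := by
    intro j t
    have hsum : HasDerivAt (fun t => ∑ k, Λ j k * Real.sin (θ k t - θ j t))
        (∑ k, Λ j k * (Real.cos (θ k t - θ j t) * (G k t - G j t))) t :=
      HasDerivAt.fun_sum fun k _ => (((hθder k t).sub (hθder j t)).sin).const_mul (Λ j k)
    exact ((hsum.const_mul (1 / (N:ℝ))).const_add (ω j)).div_const (d j)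
  -- bound on G' j0
  set K : ℝ := ((1 / (N:ℝ)) * ∑ k, |Λ j0 k| * (2 * B)) / d j0 with hKdef
  have hK0 : 0 ≤ K := by
    apply div_nonneg _ (hd j0).le
    have : (0:ℝ) ≤ ∑ k, |Λ j0 k| * (2 * B) :=
      Finset.sum_nonneg fun k _ => mul_nonneg (abs_nonneg _) (by positivity)
    positivity
  have hKb : ∀ t, |G' j0 t| ≤ K := by
    intro t
    have hdj := hd j0
    rw [hG'def, hKdef]
    simp only [abs_div, abs_of_pos hdj]
    gcongr
    rw [abs_mul, abs_of_nonneg (by positivity : (0:ℝ) ≤ 1 / (N:ℝ))]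
    refine mul_le_mul_of_nonneg_left ?_ (by positivity)
    refine (Finset.abs_sum_le_sum_abs _ _).trans ?_
    refine Finset.sum_le_sum fun k _ => ?_
    rw [abs_mul]
    refine mul_le_mul_of_nonneg_left ?_ (abs_nonneg _)
    rw [abs_mul]
    have h1 : |Real.cos (θ k t - θ j0 t)| ≤ 1 := Real.abs_cos_le_one _
    have h2 : |G k t - G j0 t| ≤ 2 * B := by
      refine (abs_sub _ _).trans ?_
      have := hGB k t; have := hGB j0 t; linarith
    calc |Real.cos (θ k t - θ j0 t)| * |G k t - G j0 t| ≤ 1 * (2 * B) :=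
          mul_le_mul h1 h2 (abs_nonneg _) zero_le_one
      _ = 2 * B := one_mul _
  -- Lipschitz bound for G j0
  have hLip : ∀ s t : ℝ, |G j0 s - G j0 t| ≤ K * |s - t| := by
    intro s t
    have := convex_univ.norm_image_sub_le_of_norm_hasDerivWithin_le
      (f := G j0) (f' := G' j0) (s := Set.univ)
      (fun x _ => (hGder j0 x).hasDerivWithinAt)
      (fun x _ => by rw [Real.norm_eq_abs]; exact hKb x)
      (Set.mem_univ t) (Set.mem_univ s)
    simpa [Real.norm_eq_abs] using this
  -- Lyapunov function
  set V : ℝ → ℝ := fun t => -(∑ j, ω j * θ j t)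
    - (1 / (2 * (N:ℝ))) * ∑ j, ∑ k, Λ j k * Real.cos (θ k t - θ j t) with hVdef
  -- key algebraic identity for the derivative of V
  have key : ∀ t, -(∑ j, ω j * G j t)
      - (1 / (2 * (N:ℝ))) * ∑ j, ∑ k, Λ j k * (-Real.sin (θ k t - θ j t) * (G k t - G j t))
      = -(∑ j, d j * G j t ^ 2) := by
    intro t
    set X : ℝ := ∑ j, (∑ k, Λ j k * Real.sin (θ k t - θ j t)) * G j t with hXdef
    have h1 : (∑ j, ∑ k, Λ j k * Real.sin (θ k t - θ j t) * G k t)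
        = ∑ j, ∑ k, -(Λ j k * Real.sin (θ k t - θ j t) * G j t) := by
      rw [Finset.sum_comm]
      refine Finset.sum_congr rfl fun j _ => Finset.sum_congr rfl fun k _ => ?_
      rw [hΛsym k j, ← neg_sub (θ k t) (θ j t), Real.sin_neg]
      ring
    have h2 : (∑ j, ∑ k, Λ j k * (-Real.sin (θ k t - θ j t) * (G k t - G j t))) = 2 * X := by
      have e : ∀ j k : Fin N, Λ j k * (-Real.sin (θ k t - θ j t) * (G k t - G j t))
          = -(Λ j k * Real.sin (θ k t - θ j t) * G k t)
            + Λ j k * Real.sin (θ k t - θ j t) * G j t := by intro j k; ring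
      simp only [e]
      rw [hXdef]
      simp only [Finset.sum_add_distrib, Finset.sum_neg_distrib]
      rw [h1]
      simp only [Finset.sum_neg_distrib, neg_neg]
      have h3 : (∑ j, ∑ k, Λ j k * Real.sin (θ k t - θ j t) * G j t)
          = ∑ j, (∑ k, Λ j k * Real.sin (θ k t - θ j t)) * G j t := by
        refine Finset.sum_congr rfl fun j _ => ?_
        rw [Finset.sum_mul]
      rw [h3]; ring
    have h4 : (∑ j, d j * G j t ^ 2) = (∑ j, ω j * G j t) + (1 / (N:ℝ)) * X := by
      rw [hXdef, Finset.mul_sum, ← Finset.sum_add_distrib]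
      refine Finset.sum_congr rfl fun j _ => ?_
      have hh := hodeG j t
      calc d j * G j t ^ 2 = (d j * G j t) * G j t := by ring
        _ = (ω j + (1 / (N:ℝ)) * ∑ k, Λ j k * Real.sin (θ k t - θ j t)) * G j t := by rw [hh]
        _ = ω j * G j t + 1 / (N:ℝ) * ((∑ k, Λ j k * Real.sin (θ k t - θ j t)) * G j t) := by
            ring
    rw [h2, h4]
    have hNne : (N:ℝ) ≠ 0 := hNR.ne'
    field_simp
    ring
  have hVder : ∀ t, HasDerivAt V (-(∑ j, d j * G j t ^ 2)) t := by
    intro t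
    have hA : HasDerivAt (fun t => ∑ j, ω j * θ j t) (∑ j, ω j * G j t) t :=
      HasDerivAt.fun_sum fun j _ => (hθder j t).const_mul (ω j)
    have hB2 : HasDerivAt (fun t => ∑ j, ∑ k, Λ j k * Real.cos (θ k t - θ j t))
        (∑ j, ∑ k, Λ j k * (-Real.sin (θ k t - θ j t) * (G k t - G j t))) t :=
      HasDerivAt.fun_sum fun j _ => HasDerivAt.fun_sum fun k _ =>
        (((hθder k t).sub (hθder j t)).cos).const_mul (Λ j k)
    have hraw := (hA.neg).sub (hB2.const_mul (1 / (2 * (N:ℝ))))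
    rw [hVdef, ← key t]
    exact hraw
  have hVanti : Antitone V := by
    refine antitone_of_hasDerivAt_nonpos hVder ?_
    intro t
    simp only [Pi.zero_apply, neg_nonpos]
    exact Finset.sum_nonneg fun j _ => mul_nonneg (hd j).le (sq_nonneg _)
  -- lower bound for V on (0, ∞)
  set Vlow : ℝ := -(∑ j, |ω j| * L) - (1 / (2 * (N:ℝ))) * ∑ j, ∑ k, |Λ j k| with hVlowdef
  have hVlow : ∀ t : ℝ, 0 < t → Vlow ≤ V t := by
    intro t ht
    have e : ∑ j, ω j * θ j t = ∑ j, ω j * (θ j t - θ j0 t) := by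
      simp only [mul_sub]
      rw [Finset.sum_sub_distrib, ← Finset.sum_mul, hω, zero_mul, sub_zero]
    have h1 : |∑ j, ω j * θ j t| ≤ ∑ j, |ω j| * L := by
      rw [e]
      refine (Finset.abs_sum_le_sum_abs _ _).trans ?_
      refine Finset.sum_le_sum fun j _ => ?_
      rw [abs_mul]
      exact mul_le_mul_of_nonneg_left (hlock j j0 t ht) (abs_nonneg _)
    have h2 : |∑ j, ∑ k, Λ j k * Real.cos (θ k t - θ j t)| ≤ ∑ j, ∑ k, |Λ j k| := by
      refine (Finset.abs_sum_le_sum_abs _ _).trans ?_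
      refine Finset.sum_le_sum fun j _ => ?_
      refine (Finset.abs_sum_le_sum_abs _ _).trans ?_
      refine Finset.sum_le_sum fun k _ => ?_
      rw [abs_mul]
      exact mul_le_of_le_one_right (abs_nonneg _) (Real.abs_cos_le_one _)
    have hc : (0:ℝ) < 1 / (2 * (N:ℝ)) := by positivity
    have hVt : V t = -(∑ j, ω j * θ j t)
        - (1 / (2 * (N:ℝ))) * ∑ j, ∑ k, Λ j k * Real.cos (θ k t - θ j t) := rfl
    have ha := le_abs_self (∑ j, ω j * θ j t)
    have hb := le_abs_self (∑ j, ∑ k, Λ j k * Real.cos (θ k t - θ j t))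
    have hmul : (1 / (2 * (N:ℝ))) * (∑ j, ∑ k, Λ j k * Real.cos (θ k t - θ j t))
        ≤ (1 / (2 * (N:ℝ))) * ∑ j, ∑ k, |Λ j k| :=
      mul_le_mul_of_nonneg_left (hb.trans h2) hc.le
    rw [hVlowdef, hVt]
    linarith
  -- contradiction argument
  by_contra hcon
  have hfeq : (fun t => deriv (θ j0) t) = G j0 := funext fun t => hderiv j0 t
  rw [hfeq, Metric.tendsto_atTop] at hcon
  push_neg at hcon
  obtain ⟨ε, hε, hfreq⟩ := hcon
  simp only [Real.dist_0_eq_abs] at hfreq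
  set δ : ℝ := ε / (2 * (K + 1)) with hδdef
  have hδpos : 0 < δ := by positivity
  have hKδ : K * δ ≤ ε / 2 := by
    rw [hδdef, ← mul_div_assoc, div_le_div_iff₀ (by linarith) two_pos]
    nlinarith
  set c : ℝ := d j0 * (ε / 2) ^ 2 with hcdef
  have hcpos : 0 < c := by
    have := hd j0; positivity
  -- one decrease step
  have claim : ∀ u : ℝ, 1 ≤ u → ∃ T, u ≤ T ∧ V T ≤ V u - 2 * δ * c := by
    intro u hu
    obtain ⟨t, ht, hεt⟩ := hfreq (u + δ)
    have hglb : ∀ s ∈ Set.Icc (t - δ) (t + δ), ε / 2 ≤ |G j0 s| := by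
      intro s hs
      have h1 : |G j0 t - G j0 s| ≤ K * |t - s| := hLip t s
      have h2 : |t - s| ≤ δ := abs_le.mpr ⟨by linarith [hs.2], by linarith [hs.1]⟩
      have h3 : |G j0 t| - |G j0 s| ≤ K * δ :=
        (abs_sub_abs_le_abs_sub _ _).trans (h1.trans (mul_le_mul_of_nonneg_left h2 hK0))
      linarith
    have hsumlb : ∀ s ∈ Set.Icc (t - δ) (t + δ), c ≤ ∑ j, d j * G j s ^ 2 := by
      intro s hs
      have h0 := hglb s hs
      have h1 : (ε / 2) ^ 2 ≤ G j0 s ^ 2 := by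
        calc (ε / 2) ^ 2 ≤ |G j0 s| ^ 2 := by
              apply pow_le_pow_left₀ (by positivity) h0
          _ = G j0 s ^ 2 := sq_abs _
      have h2 : c ≤ d j0 * G j0 s ^ 2 := by
        rw [hcdef]; exact mul_le_mul_of_nonneg_left h1 (hd j0).le
      exact h2.trans (Finset.single_le_sum (f := fun j => d j * G j s ^ 2)
        (fun j _ => mul_nonneg (hd j).le (sq_nonneg _)) (Finset.mem_univ j0))
    -- quantitative decrease on the interval
    have hdec : V (t + δ) ≤ V (t - δ) - 2 * δ * c := by
      have hWder : ∀ s : ℝ, HasDerivAt (fun s => V s + c * s)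
          (-(∑ j, d j * G j s ^ 2) + c * 1) s := fun s =>
        (hVder s).add ((hasDerivAt_id s).const_mul c)
      have hanti : AntitoneOn (fun s => V s + c * s) (Set.Icc (t - δ) (t + δ)) := by
        refine antitoneOn_of_hasDerivWithinAt_nonpos (convex_Icc _ _)
          (fun s _ => (hWder s).differentiableAt.continuousAt.continuousWithinAt)
          (fun s _ => (hWder s).hasDerivWithinAt) (fun s hs => ?_)
        rw [interior_Icc] at hs
        have := hsumlb s (Set.mem_Icc_of_Ioo hs)
        have hc1 : c * 1 = c := mul_one c
        linarith [hc1]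
      have hmem1 : t - δ ∈ Set.Icc (t - δ) (t + δ) := Set.mem_Icc.mpr ⟨le_rfl, by linarith⟩
      have hmem2 : t + δ ∈ Set.Icc (t - δ) (t + δ) := Set.mem_Icc.mpr ⟨by linarith, le_rfl⟩
      have hW : V (t + δ) + c * (t + δ) ≤ V (t - δ) + c * (t - δ) :=
        hanti hmem1 hmem2 (by linarith)
      have e1 : c * (t + δ) = c * t + c * δ := by ring
      have e2 : c * (t - δ) = c * t - c * δ := by ring
      have e3 : 2 * δ * c = c * δ + c * δ := by ring
      linarith
    refine ⟨t + δ, by linarith, ?_⟩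
    have h5 : V (t - δ) ≤ V u := hVanti (by linarith : u ≤ t - δ)
    linarith
  -- iterate the decrease
  have iter : ∀ n : ℕ, ∃ T, 1 ≤ T ∧ V T ≤ V 1 - n * (2 * δ * c) := by
    intro n
    induction n with
    | zero => exact ⟨1, le_rfl, by simp⟩
    | succ n ih =>
      obtain ⟨T, hT1, hTV⟩ := ih
      obtain ⟨T', hT'1, hT'V⟩ := claim T hT1
      refine ⟨T', hT1.trans hT'1, ?_⟩
      have hVTu : V T' ≤ V T - 2 * δ * c := hT'V
      push_cast
      linarith
  obtain ⟨n, hn⟩ := exists_nat_gt ((V 1 - Vlow) / (2 * δ * c))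
  obtain ⟨T, hT1, hTV⟩ := iter n
  have hVT := hVlow T (by linarith)
  have h2δc : 0 < 2 * δ * c := by positivity
  rw [div_lt_iff₀ h2δc] at hn
  linarith
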